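/- For M > 0, Λ > 0 with 9M²Λ < 1, the 2×2 matrix with entries g_{t̄t̄} = -(1-μ(r)), g_{t̄r} = g_{rt̄} = -ξ(r), g_{rr} = 27M²/((1-9M²Λ)r²) has determinant equal to -1 for all r > 0 (in particular the (t̄,r) block of the Schwarzschild–de Sitter metric in regular hyperboloidal coordinates is a Lorentzian metric of determinant -1, even at the horizons where 1-μ(r)=0). -/

import Mathlib

noncomputable def μ (M Λ r : ℝ) : ℝ := 2*M/r + Λ*r^2/3

noncomputable def ξ (M Λ r : ℝ) : ℝ :=
  (1 - 3*M/r) * Real.sqrt (1 + 6*M/r) / Real.sqrt (1 - 9*M^2*Λ)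

theorem metric_block_det_neg_one (M Λ : ℝ) (hM : 0 < M) (hΛ : 0 < Λ)
    (hsub : 9*M^2*Λ < 1) (r : ℝ) (hr : 0 < r) :
    Matrix.det !![-(1 - μ M Λ r), -ξ M Λ r;
                  -ξ M Λ r, 27*M^2 / ((1 - 9*M^2*Λ) * r^2)] = -1 := by
  have h1 : (0:ℝ) < 1 + 6*M/r := by positivity
  have h2 : (0:ℝ) < 1 - 9*M^2*Λ := by linarith
  have hs1 : Real.sqrt (1 + 6*M/r) ^ 2 = 1 + 6*M/r := Real.sq_sqrt h1.le
  have hs2 : Real.sqrt (1 - 9*M^2*Λ) ^ 2 = 1 - 9*M^2*Λ := Real.sq_sqrt h2.le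
  have hξ2 : ξ M Λ r ^ 2 = (1-3*M/r)^2 * (1+6*M/r) / (1-9*M^2*Λ) := by
    rw [ξ, div_pow, mul_pow, hs1, hs2]
  have key : -ξ M Λ r * -ξ M Λ r = ξ M Λ r ^ 2 := by ring
  simp only [Matrix.det_fin_two_of, key, hξ2, μ]
  field_simp
  have h3 : (1 - M^2*Λ*9)⁻¹ * (1 - M^2*Λ*9) = 1 := inv_mul_cancel₀ (by linarith)
  linear_combination (-3*r^3) * h3
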